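/- Let R, S, T be bounded triangles with α(R) ≤ α(T). Suppose there are morphisms f: 𝕀^R → 𝕀^S(ε) and g: 𝕀^S → 𝕀^T(ε) with g(ε) ∘ f ≠ 0. Then 𝕀^S is ε-interleaved with 𝕀^R or with 𝕀^T. -/

import Mathlib

open CategoryTheory Classical

noncomputable section

/-- Convexity of a subset of a poset. -/
def IsConvex {P : Type} [Preorder P] (I : Set P) : Prop :=
  ∀ ⦃p q r : P⦄, p ∈ I → q ∈ I → p ≤ r → r ≤ q → r ∈ I

/-- Zigzag connectivity within a subset. -/
def ZigzagConnected {P : Type} [Preorder P] (I : Set P) : Prop :=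
  ∀ p ∈ I, ∀ q ∈ I,
    Relation.ReflTransGen (fun a b => a ∈ I ∧ b ∈ I ∧ (a ≤ b ∨ b ≤ a)) p q

/-- An interval in a poset: nonempty, convex, and zigzag connected. -/
def IsIntervalSet {P : Type} [Preorder P] (I : Set P) : Prop :=
  I.Nonempty ∧ IsConvex I ∧ ZigzagConnected I

open scoped Classical in
/-- The pointwise vector space of the interval module: `k` (as `⊤`) on `I`, `0` off `I`. -/
def objSub (k : Type) [Field k] {P : Type} [Preorder P] (I : Set P) (p : P) : Submodule k k :=
  if p ∈ I then ⊤ else ⊥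

open scoped Classical in
/-- The interval persistence module `𝕀^I` as a functor `P ⥤ ModuleCat k`. -/
def intervalModule (k : Type) [Field k] {P : Type} [Preorder P] (I : Set P)
    (hI : IsConvex I) : P ⥤ ModuleCat.{0} k where
  obj p := ModuleCat.of k (objSub k I p)
  map {p q} h :=
    if hpq : p ∈ I ∧ q ∈ I then
      ModuleCat.ofHom
        { toFun := fun x => ⟨(x : k), by simp [objSub, hpq.2]⟩
          map_add' := by intros; rfl
          map_smul' := by intros; rfl }
    else 0
  map_id := by
    intro p
    try dsimp only
    by_cases hp : p ∈ I
    · rw [dif_pos ⟨hp, hp⟩]; rfl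
    · rw [dif_neg (fun h => hp h.1)]
      haveI : Subsingleton ↥(objSub k I p) := by
        rw [objSub, if_neg hp]; infer_instance
      apply ModuleCat.hom_ext; apply LinearMap.ext; intro x
      exact this.allEq _ _
  map_comp := by
    intro p q r hpq hqr
    try dsimp only
    by_cases hpr : p ∈ I ∧ r ∈ I
    · have hq : q ∈ I := hI hpr.1 hpr.2 (leOfHom hpq) (leOfHom hqr)
      rw [dif_pos hpr, dif_pos ⟨hpr.1, hq⟩, dif_pos ⟨hq, hpr.2⟩]
      rfl
    · rw [dif_neg hpr]
      by_cases hp : p ∈ I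
      · have hr : r ∉ I := fun hr => hpr ⟨hp, hr⟩
        haveI : Subsingleton ↥(objSub k I r) := by
          rw [objSub, if_neg hr]; infer_instance
        apply ModuleCat.hom_ext; apply LinearMap.ext; intro x
        exact this.allEq _ _
      · haveI : Subsingleton ↥(objSub k I p) := by
          rw [objSub, if_neg hp]; infer_instance
        apply ModuleCat.hom_ext; apply LinearMap.ext; intro x
        have hx : x = 0 := this.allEq x 0
        rw [hx]
        simp

open DirectSum

open scoped ENNReal

/-- Direct sum of a family of persistence modules. -/
def dsumF (k : Type) [Field k] {P : Type} [Preorder P] {ι : Type}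
    (F : ι → P ⥤ ModuleCat.{0} k) : P ⥤ ModuleCat.{0} k where
  obj p := ModuleCat.of k (⨁ i, ((F i).obj p : Type))
  map {p q} h := ModuleCat.ofHom
    (DFinsupp.mapRange.linearMap (fun i => ((F i).map h).hom))
  map_id := by
    intro p
    try dsimp only
    simp only [CategoryTheory.Functor.map_id]
    apply ModuleCat.hom_ext
    exact DFinsupp.mapRange.linearMap_id
  map_comp := by
    intro p q r hpq hqr
    try dsimp only
    simp only [CategoryTheory.Functor.map_comp]
    apply ModuleCat.hom_ext; apply LinearMap.ext; intro x
    apply DFinsupp.ext; intro i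
    rfl

/-- Use the preorder category structure on `Fin n → ℝ`. -/
instance RnCat (n : ℕ) : Category (Fin n → ℝ) := Preorder.smallCategory _

/-- Diagonal translation by `ε` as an endofunctor of the poset `Fin n → ℝ`. -/
def transl (n : ℕ) (ε : ℝ) : (Fin n → ℝ) ⥤ (Fin n → ℝ) :=
  Monotone.functor (f := fun p i => p i + ε)
    (fun _ _ hab i => by dsimp only; linarith [hab i])

/-- `M` and `N` are `ε`-interleaved `ℝⁿ`-persistence modules. -/
def Interleaved (k : Type) [Field k] {n : ℕ} (ε : ℝ)
    (M N : (Fin n → ℝ) ⥤ ModuleCat.{0} k) : Prop :=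
  ∃ _hε : 0 ≤ ε, ∃ (f : M ⟶ transl n ε ⋙ N) (g : N ⟶ transl n ε ⋙ M),
    (∀ p : Fin n → ℝ, f.app p ≫ g.app (fun i => p i + ε) =
      M.map (homOfLE (show p ≤ fun i => p i + ε + ε from
        fun i => by show p i ≤ p i + ε + ε; linarith))) ∧
    (∀ p : Fin n → ℝ, g.app p ≫ f.app (fun i => p i + ε) =
      N.map (homOfLE (show p ≤ fun i => p i + ε + ε from
        fun i => by show p i ≤ p i + ε + ε; linarith)))

/-- An interval `I ⊆ ℝⁿ` is `δ`-trivial: it contains no pair `p ≤ p + δ`. -/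
def SetTrivial {n : ℕ} (δ : ℝ) (I : Set (Fin n → ℝ)) : Prop :=
  ¬ ∃ p, p ∈ I ∧ (fun i => p i + δ) ∈ I

/-- Barcode data: an indexed family of nonempty convex intervals in `ℝⁿ`. -/
structure Barcode (n : ℕ) where
  ι : Type
  I : ι → Set (Fin n → ℝ)
  nonempty : ∀ i, (I i).Nonempty
  conv : ∀ i, IsConvex (I i)

/-- The interval decomposable module associated to barcode data. -/
def Barcode.module (k : Type) [Field k] {n : ℕ} (B : Barcode n) :
    (Fin n → ℝ) ⥤ ModuleCat.{0} k :=
  dsumF k fun i => intervalModule k (B.I i) (B.conv i)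

/-- `B` is pointwise finite dimensional. -/
def Barcode.pfd (k : Type) [Field k] {n : ℕ} (B : Barcode n) : Prop :=
  ∀ p : Fin n → ℝ, Module.Finite k ((B.module k).obj p)

/-- An `ε`-matching between two barcodes: a partial bijection such that unmatched
intervals are `2ε`-trivial and matched intervals are `ε`-interleaved. -/
def Matched (k : Type) [Field k] {n : ℕ} (ε : ℝ) (B C : Barcode n) : Prop :=
  0 ≤ ε ∧ ∃ (A : Set B.ι) (A' : Set C.ι) (e : A ≃ A'),
    (∀ i ∉ A, SetTrivial (2 * ε) (B.I i)) ∧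
    (∀ j ∉ A', SetTrivial (2 * ε) (C.I j)) ∧
    (∀ i : A, Interleaved k ε
      (intervalModule k (B.I i) (B.conv i))
      (intervalModule k (C.I (e i)) (C.conv (e i))))

/-- The interleaving distance, valued in `ℝ≥0∞`. -/
def dInt (k : Type) [Field k] {n : ℕ} (M N : (Fin n → ℝ) ⥤ ModuleCat.{0} k) : ℝ≥0∞ :=
  ⨅ (ε : ℝ) (_ : Interleaved k ε M N), ENNReal.ofReal ε

/-- The bottleneck distance between barcodes, valued in `ℝ≥0∞`. -/
def dBot (k : Type) [Field k] {n : ℕ} (B C : Barcode n) : ℝ≥0∞ :=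
  ⨅ (ε : ℝ) (_ : Matched k ε B C), ENNReal.ofReal ε

/-- Rectangles: products of real intervals. -/
def rectSet {n : ℕ} (R : Fin n → Set ℝ) : Set (Fin n → ℝ) := {x | ∀ i, x i ∈ R i}

theorem rectSet_convex {n : ℕ} (R : Fin n → Set ℝ) (h : ∀ i, (R i).OrdConnected) :
    IsConvex (rectSet R) := by
  intro p q r hp hq hpr hrq i
  exact (h i).out (hp i) (hq i) ⟨hpr i, hrq i⟩

/-- A barcode consists of rectangles. -/
def IsRectBarcode {n : ℕ} (B : Barcode n) : Prop :=
  ∀ i, ∃ R : Fin n → Set ℝ,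
    (∀ j, (R j).Nonempty ∧ (R j).OrdConnected) ∧ B.I i = rectSet R

/-- A bounded triangle `{(x,y) | x < a, y < b} \ {x + y < 0}` in `ℝ²`. -/
def triangle (a b : ℝ) : Set (Fin 2 → ℝ) :=
  {p | p 0 < a ∧ p 1 < b ∧ 0 ≤ p 0 + p 1}

theorem triangle_convex (a b : ℝ) : IsConvex (triangle a b) :=
  fun _p _q _r hp hq hpr hrq =>
    ⟨lt_of_le_of_lt (hrq 0) hq.1, lt_of_le_of_lt (hrq 1) hq.2.1,
      le_trans hp.2.2 (add_le_add (hpr 0) (hpr 1))⟩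

/-- A general (possibly unbounded) triangle, `a, b ∈ ℝ ∪ {∞}`. -/
def triangleE (a b : EReal) : Set (Fin 2 → ℝ) :=
  {p | (p 0 : EReal) < a ∧ (p 1 : EReal) < b ∧ 0 ≤ p 0 + p 1}

theorem triangleE_convex (a b : EReal) : IsConvex (triangleE a b) :=
  fun _p _q _r hp hq hpr hrq =>
    ⟨lt_of_le_of_lt (EReal.coe_le_coe_iff.mpr (hrq 0)) hq.1,
      lt_of_le_of_lt (EReal.coe_le_coe_iff.mpr (hrq 1)) hq.2.1,
      le_trans hp.2.2 (add_le_add (hpr 0) (hpr 1))⟩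

/-- A barcode consists of triangles. -/
def IsTriangleBarcode (B : Barcode 2) : Prop :=
  ∀ i, ∃ a b : EReal, a ≠ ⊥ ∧ b ≠ ⊥ ∧ 0 < a + b ∧ B.I i = triangleE a b

/-- `I ⊆ ℝⁿ` is `δ`-significant. -/
def SetSignificant {n : ℕ} (δ : ℝ) (I : Set (Fin n → ℝ)) : Prop :=
  ∃ p, p ∈ I ∧ (fun i => p i + δ) ∈ I


/-! ### Auxiliary machinery for Lemma 3.15 -/

open scoped Classical in
/-- The canonical map between fibers of interval modules. -/
def om (k : Type) [Field k] {P : Type} [Preorder P] (I J : Set P) (p q : P) :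
    objSub k I p →ₗ[k] objSub k J q :=
  if h : p ∈ I ∧ q ∈ J then
    { toFun := fun x => ⟨(x : k), by simp [objSub, h.2]⟩
      map_add' := by intros; rfl
      map_smul' := by intros; rfl }
  else 0

lemma om_coe (k : Type) [Field k] {P : Type} [Preorder P] (I J : Set P) (p q : P)
    (x : objSub k I p) :
    ((om k I J p q x : k)) = if p ∈ I ∧ q ∈ J then (x : k) else 0 := by
  unfold om
  split_ifs with h
  · rfl
  · simp

lemma mem_of_coe_ne (k : Type) [Field k] {P : Type} [Preorder P] {I : Set P} {p : P}
    {x : objSub k I p} (hx : (x : k) ≠ 0) : p ∈ I := by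
  by_contra h
  have := x.2
  simp only [objSub, if_neg h] at this
  exact hx ((Submodule.mem_bot k).mp this)

lemma intervalModule_map (k : Type) [Field k] {P : Type} [Preorder P] (I : Set P)
    (hI : IsConvex I) {p q : P} (h : p ⟶ q) :
    (intervalModule k I hI).map h = ModuleCat.ofHom (om k I I p q) := by
  show (if hpq : p ∈ I ∧ q ∈ I then _ else 0) = _
  unfold om
  split_ifs with hpq
  · exact (dif_pos hpq).trans rfl
  · exact (dif_neg hpq).trans rfl

lemma mem_triangle_iff {a b : ℝ} {p : Fin 2 → ℝ} :
    p ∈ triangle a b ↔ p 0 < a ∧ p 1 < b ∧ 0 ≤ p 0 + p 1 := Iff.rfl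

/-- Hom `𝕀^S ⟶ 𝕀^R(ε)` when the max of `R` dominates that of `S` up to `ε`. -/
def triHom (k : Type) [Field k] (a b a' b' ε : ℝ) (hε : 0 ≤ ε)
    (ha : a' ≤ a + ε) (hb : b' ≤ b + ε) :
    intervalModule k (triangle a b) (triangle_convex a b) ⟶
      transl 2 ε ⋙ intervalModule k (triangle a' b') (triangle_convex a' b') where
  app p := ModuleCat.ofHom (om k (triangle a b) (triangle a' b') p (fun i => p i + ε))
  naturality p q h := by
    have hpq : p ≤ q := leOfHom h
    rw [intervalModule_map]
    show ModuleCat.ofHom (om k (triangle a b) (triangle a b) p q) ≫ _ =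
      _ ≫ (intervalModule k (triangle a' b') (triangle_convex a' b')).map ((transl 2 ε).map h)
    rw [intervalModule_map]
    apply ModuleCat.hom_ext
    apply LinearMap.ext
    intro (x : objSub k (triangle a b) p)
    apply Subtype.ext
    show ((om k (triangle a b) (triangle a' b') q (fun i => q i + ε)
        (om k (triangle a b) (triangle a b) p q x) : k)) =
      ((om k (triangle a' b') (triangle a' b') (fun i => p i + ε) (fun i => q i + ε)
        (om k (triangle a b) (triangle a' b') p (fun i => p i + ε) x) : k))
    rw [om_coe, om_coe, om_coe, om_coe]
    by_cases hx : (x : k) = 0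
    · split_ifs <;> simp [hx]
    · have hp : p ∈ triangle a b := mem_of_coe_ne k hx
      have h0 := hpq 0
      have h1 := hpq 1
      rw [← ite_and, ← ite_and]
      refine if_congr ?_ rfl rfl
      simp only [mem_triangle_iff] at *
      obtain ⟨hp0, hp1, hps⟩ := hp
      constructor
      · rintro ⟨⟨⟨hq0, hq1, hqs⟩, ⟨hr0, hr1, hrs⟩⟩, -⟩
        exact ⟨⟨⟨by linarith, by linarith, by linarith⟩, ⟨hr0, hr1, hrs⟩⟩,
          ⟨⟨hp0, hp1, hps⟩, ⟨by linarith, by linarith, by linarith⟩⟩⟩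
      · rintro ⟨⟨⟨hr0, hr1, hrs⟩, ⟨hs0, hs1, hss⟩⟩, -⟩
        exact ⟨⟨⟨by linarith, by linarith, by linarith⟩, ⟨hs0, hs1, hss⟩⟩,
          ⟨⟨hp0, hp1, hps⟩, ⟨by linarith, by linarith, by linarith⟩⟩⟩

lemma triHom_comp (k : Type) [Field k] (a b a' b' ε : ℝ) (hε : 0 ≤ ε)
    (h1 : a' ≤ a + ε) (h2 : b' ≤ b + ε) (h3 : a ≤ a' + ε) (h4 : b ≤ b' + ε)
    (p : Fin 2 → ℝ) :
    (triHom k a b a' b' ε hε h1 h2).app p ≫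
      (triHom k a' b' a b ε hε h3 h4).app (fun i => p i + ε) =
    (intervalModule k (triangle a b) (triangle_convex a b)).map
      (homOfLE (show p ≤ fun i => p i + ε + ε from
        fun i => by show p i ≤ p i + ε + ε; linarith)) := by
  rw [intervalModule_map]
  apply ModuleCat.hom_ext
  apply LinearMap.ext
  intro (x : objSub k (triangle a b) p)
  apply Subtype.ext
  show ((om k (triangle a' b') (triangle a b) (fun i => p i + ε)
      (fun i => (fun j => p j + ε) i + ε)
      (om k (triangle a b) (triangle a' b') p (fun i => p i + ε) x) : k)) =
    ((om k (triangle a b) (triangle a b) p (fun i => p i + ε + ε) x : k))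
  rw [om_coe, om_coe, om_coe]
  by_cases hx : (x : k) = 0
  · split_ifs <;> simp [hx]
  · have hp : p ∈ triangle a b := mem_of_coe_ne k hx
    rw [← ite_and]
    refine if_congr ?_ rfl rfl
    simp only [mem_triangle_iff] at *
    obtain ⟨hp0, hp1, hps⟩ := hp
    constructor
    · rintro ⟨⟨-, ⟨hq0, hq1, hqs⟩⟩, ⟨-, -⟩⟩
      exact ⟨⟨hp0, hp1, hps⟩, ⟨hq0, hq1, hqs⟩⟩
    · rintro ⟨-, ⟨hq0, hq1, hqs⟩⟩
      exact ⟨⟨⟨by linarith, by linarith, by linarith⟩, ⟨hq0, hq1, hqs⟩⟩,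
        ⟨⟨hp0, hp1, hps⟩, ⟨by linarith, by linarith, by linarith⟩⟩⟩

lemma interleaved_of_triangles (k : Type) [Field k] (a b a' b' ε : ℝ) (hε : 0 ≤ ε)
    (h1 : a' ≤ a + ε) (h2 : b' ≤ b + ε) (h3 : a ≤ a' + ε) (h4 : b ≤ b' + ε) :
    Interleaved k ε
      (intervalModule k (triangle a b) (triangle_convex a b))
      (intervalModule k (triangle a' b') (triangle_convex a' b')) :=
  ⟨hε, triHom k a b a' b' ε hε h1 h2, triHom k a' b' a b ε hε h3 h4,
    fun p => triHom_comp k a b a' b' ε hε h1 h2 h3 h4 p,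
    fun p => triHom_comp k a' b' a b ε hε h3 h4 h1 h2 p⟩

/-- `om` is injective when the membership condition holds. -/
lemma om_eq_zero (k : Type) [Field k] {P : Type} [Preorder P] {I J : Set P} {p q : P}
    (h : p ∈ I ∧ q ∈ J) {x : objSub k I p} (h0 : om k I J p q x = 0) : x = 0 := by
  apply Subtype.ext
  have := congrArg Subtype.val h0
  simp only [om_coe, if_pos h] at this
  simpa using this

/-- A nonzero hom `𝕀^S ⟶ 𝕀^R(ε)` forces the max of `R` to dominate up to `ε`. -/
lemma bound_of_ne_zero (k : Type) [Field k] (a b a' b' ε : ℝ) (hε : 0 ≤ ε)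
    (f : intervalModule k (triangle a b) (triangle_convex a b) ⟶
      transl 2 ε ⋙ intervalModule k (triangle a' b') (triangle_convex a' b'))
    (p : Fin 2 → ℝ) (x : objSub k (triangle a b) p)
    (hfx : f.app p x ≠ 0) :
    a' ≤ a + ε ∧ b' ≤ b + ε := by
  have hfx' : ∃ y : ↥(objSub k (triangle a' b') (fun i => p i + ε)),
      y = f.app p x ∧ (y : k) ≠ 0 := by
    refine ⟨f.app p x, rfl, ?_⟩
    intro h
    exact hfx (Subtype.ext h)
  obtain ⟨y, hy, hy0⟩ := hfx'
  have hx : (x : k) ≠ 0 := by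
    intro h
    apply hfx
    rw [show x = 0 from Subtype.ext h]
    exact map_zero _
  have hp : p ∈ triangle a b := mem_of_coe_ne k hx
  have hq : (fun i => p i + ε) ∈ triangle a' b' := mem_of_coe_ne k hy0
  have key : ∀ q : Fin 2 → ℝ, p ≤ q → q ∉ triangle a b →
      (fun i => q i + ε) ∈ triangle a' b' → False := by
    intro q hpq hqS hqR
    have hnat := f.naturality (homOfLE hpq)
    rw [intervalModule_map, Functor.comp_map, intervalModule_map] at hnat
    have hev := congrArg (fun φ => φ x) hnat
    simp only [CategoryTheory.comp_apply] at hev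
    have h0 : om k (triangle a b) (triangle a b) p q x = 0 := by
      apply Subtype.ext
      rw [om_coe, if_neg]
      · rfl
      · rintro ⟨-, hq'⟩
        exact hqS hq'
    have hev2 : f.app q (om k (triangle a b) (triangle a b) p q x) =
        om k (triangle a' b') (triangle a' b') (fun i => p i + ε) (fun i => q i + ε) y := by
      rw [hy]
      exact hev
    have hy' : om k (triangle a' b') (triangle a' b')
        (fun i => p i + ε) (fun i => q i + ε) y = 0 := by
      rw [← hev2, h0]
      exact map_zero _
    have : y = 0 := om_eq_zero k ⟨hq, hqR⟩ hy'
    apply hy0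
    rw [this]
    rfl
  simp only [mem_triangle_iff] at hp hq
  obtain ⟨hp0, hp1, hps⟩ := hp
  obtain ⟨hq0, hq1, hqs⟩ := hq
  constructor
  · by_contra hcon
    push_neg at hcon
    refine key ![max (p 0) a, p 1] ?_ ?_ ?_
    · rw [Pi.le_def, Fin.forall_fin_two]
      exact ⟨le_max_left _ _, le_refl _⟩
    · intro hmem
      rw [mem_triangle_iff] at hmem
      exact absurd hmem.1 (not_lt.mpr (le_max_right _ _))
    · rw [mem_triangle_iff]
      refine ⟨?_, ?_, ?_⟩
      · show max (p 0) a + ε < a'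
        rw [← max_add_add_right]
        exact max_lt (by linarith) (by linarith)
      · show p 1 + ε < b'
        linarith
      · show 0 ≤ max (p 0) a + ε + (p 1 + ε)
        have := le_max_left (p 0) a
        linarith
  · by_contra hcon
    push_neg at hcon
    refine key ![p 0, max (p 1) b] ?_ ?_ ?_
    · rw [Pi.le_def, Fin.forall_fin_two]
      exact ⟨le_refl _, le_max_left _ _⟩
    · intro hmem
      rw [mem_triangle_iff] at hmem
      exact absurd hmem.2.1 (not_lt.mpr (le_max_right _ _))
    · rw [mem_triangle_iff]
      refine ⟨?_, ?_, ?_⟩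
      · show p 0 + ε < a'
        linarith
      · show max (p 1) b + ε < b'
        rw [← max_add_add_right]
        exact max_lt (by linarith) (by linarith)
      · show 0 ≤ p 0 + ε + (max (p 1) b + ε)
        have := le_max_left (p 1) b
        linarith

/-- **Lemma 3.15.** Let `R`, `S`, `T` be bounded triangles with
`α(R) ≤ α(T)`, and suppose `f : 𝕀^R ⟶ 𝕀^S(ε)` and `g : 𝕀^S ⟶ 𝕀^T(ε)` satisfy
`g(ε) ∘ f ≠ 0`.  Then `𝕀^S` is `ε`-interleaved with `𝕀^R` or with `𝕀^T`. -/
theorem triangle_close_lemma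
    (k : Type) [Field k] (ε : ℝ) (hε : 0 ≤ ε)
    (aR bR aS bS aT bT : ℝ)
    (hR : 0 < aR + bR) (hS : 0 < aS + bS) (hT : 0 < aT + bT)
    (hα : aR + bR ≤ aT + bT)
    (f : intervalModule k (triangle aR bR) (triangle_convex aR bR) ⟶
      transl 2 ε ⋙ intervalModule k (triangle aS bS) (triangle_convex aS bS))
    (g : intervalModule k (triangle aS bS) (triangle_convex aS bS) ⟶
      transl 2 ε ⋙ intervalModule k (triangle aT bT) (triangle_convex aT bT))
    (hfg : f ≫ CategoryTheory.Functor.whiskerLeft (transl 2 ε) g ≠ 0) :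
    Interleaved k ε
      (intervalModule k (triangle aS bS) (triangle_convex aS bS))
      (intervalModule k (triangle aR bR) (triangle_convex aR bR)) ∨
    Interleaved k ε
      (intervalModule k (triangle aS bS) (triangle_convex aS bS))
      (intervalModule k (triangle aT bT) (triangle_convex aT bT)) := by
  -- extract a point where the composite is nonzero
  have hex : ∃ (p : Fin 2 → ℝ) (x : objSub k (triangle aR bR) p),
      g.app (fun i => p i + ε) (f.app p x) ≠ 0 := by
    by_contra hcon
    push_neg at hcon
    apply hfg
    apply NatTrans.ext
    funext p
    apply ModuleCat.hom_ext
    apply LinearMap.ext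
    intro (x : objSub k (triangle aR bR) p)
    exact hcon p x
  obtain ⟨p, x, hpx⟩ := hex
  have hfx : f.app p x ≠ 0 := by
    intro h
    apply hpx
    rw [h]
    exact map_zero _
  have hRS := bound_of_ne_zero k aR bR aS bS ε hε f p x hfx
  have hST := bound_of_ne_zero k aS bS aT bT ε hε g (fun i => p i + ε) (f.app p x) hpx
  obtain ⟨e1, e2⟩ := hRS
  obtain ⟨e3, e4⟩ := hST
  by_cases c1 : aR ≤ aS + ε ∧ bR ≤ bS + ε
  · left
    exact interleaved_of_triangles k aS bS aR bR ε hε c1.1 c1.2 e1 e2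
  · right
    push_neg at c1
    have c2 : aS ≤ aT + ε ∧ bS ≤ bT + ε := by
      by_contra c2
      push_neg at c2
      rcases le_or_gt aR (aS + ε) with h | h
      · have hb := c1 h
        rcases le_or_gt aS (aT + ε) with h' | h'
        · have := c2 h'; linarith
        · linarith
      · rcases le_or_gt aS (aT + ε) with h' | h'
        · have := c2 h'; linarith
        · linarith
    exact interleaved_of_triangles k aS bS aT bT ε hε e3 e4 c2.1 c2.2
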